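/- (Consequence: invariance under left Demazure multiplication.) With notation as before, if M is an element of the 0-Hecke monoid of type A_{n−1}^{(1)} satisfying T_j · M = M for all 1 ≤ j < i, then T_j · (C_{i,e} · M) = C_{i,e} · M for all 0 ≤ j < i, where 1 ≤ i < e ≤ n and C_{i,e} = T_{i−1} ⋯ T_0 T_{n−1} ⋯ T_e. -/

import Mathlib

/-- The cyclically decreasing word of `C_{i,e}`. -/
def CWord (n : ℕ) (i e : ℕ) : List (ZMod n) :=
  (List.range (if e < i then i - e else i + n - e)).map
    (fun t => (((i : ℤ) - 1 - (t : ℤ) : ℤ) : ZMod n))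

/-- The 0-Hecke (Demazure) product `C_{i,e} = T_{i−1} T_{i−2} ⋯ T_e`. -/
def CProd {M : Type*} [Monoid M] (n : ℕ) (T : ZMod n → M) (i e : ℕ) : M :=
  ((CWord n i e).map T).prod

/-- `CWord` rewritten without the hidden list coercion. -/
lemma CWord_eq (n i e : ℕ) : CWord n i e =
    (List.range (if e < i then i - e else i + n - e)).map
      (fun t : ℕ => (((i : ℤ) - 1 - (t : ℕ) : ℤ) : ZMod n)) := by
  unfold CWord
  rw [show ((do let a ← List.range (if e < i then i - e else i + n - e); pure ((a : ℕ) : ℤ)) : List ℤ)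
      = (List.range (if e < i then i - e else i + n - e)).map (fun a : ℕ => (a : ℤ)) from
    List.map_eq_flatMap.symm]
  simp [List.map_map]

lemma zmod_ne_of_bounds (n : ℕ) (d : ℕ) (h2 : 2 ≤ d) (hd : d + 2 ≤ n) :
    (d : ZMod n) ≠ 1 ∧ (d : ZMod n) ≠ -1 := by
  constructor
  · intro h
    have h1 : ((d - 1 : ℕ) : ZMod n) = 0 := by
      push_cast [Nat.cast_sub (by omega : 1 ≤ d)]
      rw [h]; ring
    have := Nat.le_of_dvd (by omega) ((ZMod.natCast_eq_zero_iff _ _).mp h1)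
    omega
  · intro h
    have h1 : ((d + 1 : ℕ) : ZMod n) = 0 := by
      push_cast
      rw [h]; ring
    have := Nat.le_of_dvd (by omega) ((ZMod.natCast_eq_zero_iff _ _).mp h1)
    omega

lemma prod_comm_of_comm {M : Type*} [Monoid M] {n : ℕ} (T : ZMod n → M) (c : ZMod n)
    (L : List (ZMod n)) (h : ∀ a ∈ L, T c * T a = T a * T c) :
    T c * (L.map T).prod = (L.map T).prod * T c := by
  induction L with
  | nil => simp
  | cons a L ih =>
    simp only [List.map_cons, List.prod_cons, ← mul_assoc, h a (by simp)]
    rw [mul_assoc, ih (fun b hb => h b (by simp [hb])), ← mul_assoc]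

lemma CWord_cons (n i e : ℕ) (hi : 1 ≤ i) (hie : i ≤ e) (hen : e ≤ n) :
    CWord n i e = (((i - 1 : ℕ) : ZMod n)) :: CWord n (i - 1) e := by
  rw [CWord_eq, CWord_eq]
  rw [if_neg (by omega), if_neg (by omega)]
  have hlen : i + n - e = (i - 1 + n - e) + 1 := by omega
  rw [hlen, List.range_succ_eq_map, List.map_cons, List.map_map]
  congr 1
  · push_cast [Nat.cast_sub hi]
    ring_nf
  · apply List.map_congr_left
    intro t _
    simp only [Function.comp_apply]
    push_cast [Nat.cast_sub hi]
    ring_nf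

lemma CProd_cons {M : Type*} [Monoid M] (n : ℕ) (T : ZMod n → M) (i e : ℕ)
    (hi : 1 ≤ i) (hie : i ≤ e) (hen : e ≤ n) :
    CProd n T i e = T ((i - 1 : ℕ) : ZMod n) * CProd n T (i - 1) e := by
  unfold CProd
  rw [CWord_cons n i e hi hie hen, List.map_cons, List.prod_cons]

/-- In the 0-Hecke monoid of affine type `A_{n−1}^{(1)}`, if
`T_j · x = x` for all `1 ≤ j < i`, then `T_j · (C_{i,e} · x) = C_{i,e} · x`
for all `0 ≤ j < i`, where `1 ≤ i < e ≤ n`. -/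
theorem hecke_left_invariance {M : Type*} [Monoid M] (n : ℕ) (hn : 3 ≤ n)
    (T : ZMod n → M)
    (hidem : ∀ a : ZMod n, T a * T a = T a)
    (hcomm : ∀ a b : ZMod n, a - b ≠ 1 → b - a ≠ 1 → T a * T b = T b * T a)
    (hbraid : ∀ a : ZMod n, T a * T (a + 1) * T a = T (a + 1) * T a * T (a + 1))
    (i e : ℕ) (hi : 1 ≤ i) (hie : i < e) (hen : e ≤ n)
    (x : M) (hx : ∀ j : ℕ, 1 ≤ j → j < i → T ((j : ℕ) : ZMod n) * x = x) :
    ∀ j : ℕ, j < i →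
      T ((j : ℕ) : ZMod n) * (CProd n T i e * x) = CProd n T i e * x := by
  -- `T (m-1)` commutes with every letter of `CWord n (m-2) e`, for `2 ≤ m ≤ i`.
  have hcw : ∀ m : ℕ, 2 ≤ m → m ≤ i → ∀ a ∈ CWord n (m - 2) e,
      T ((m - 1 : ℕ) : ZMod n) * T a = T a * T ((m - 1 : ℕ) : ZMod n) := by
    intro m hm2 hmi a ha
    rw [CWord_eq, if_neg (by omega)] at ha
    simp only [List.mem_map, List.mem_range] at ha
    obtain ⟨t, ht, rfl⟩ := ha
    have hdiff : ((m - 1 : ℕ) : ZMod n) - ((((m - 2 : ℕ) : ℤ) - 1 - (t : ℕ) : ℤ) : ZMod n)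
        = ((t + 2 : ℕ) : ZMod n) := by
      push_cast [Nat.cast_sub (by omega : 1 ≤ m), Nat.cast_sub (by omega : 2 ≤ m)]
      ring
    have hne := zmod_ne_of_bounds n (t + 2) (by omega) (by omega)
    apply hcomm
    · rw [hdiff]; exact hne.1
    · intro h
      apply hne.2
      rw [← hdiff, ← neg_eq_iff_eq_neg, neg_sub]
      exact h
  have key : ∀ m : ℕ, m ≤ i → ∀ j : ℕ, j < m →
      T ((j : ℕ) : ZMod n) * (CProd n T m e * x) = CProd n T m e * x := by
    intro m
    induction m using Nat.strong_induction_on with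
    | _ m IH =>
      intro hmi j hjm
      have hm1 : 1 ≤ m := by omega
      rw [CProd_cons n T m e hm1 (by omega) hen]
      rcases Nat.lt_or_ge j (m - 1) with hj1 | hj1
      · rcases Nat.lt_or_ge j (m - 2) with hj2 | hj2
        · -- j < m - 2 : commute past the first letter, recurse
          have hd : ((m - 1 : ℕ) : ZMod n) - ((j : ℕ) : ZMod n)
              = ((m - 1 - j : ℕ) : ZMod n) := by
            push_cast [Nat.cast_sub (by omega : 1 ≤ m), Nat.cast_sub (by omega : j ≤ m - 1)]
            ring
          have hne := zmod_ne_of_bounds n (m - 1 - j) (by omega) (by omega)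
          have hc : T ((j : ℕ) : ZMod n) * T ((m - 1 : ℕ) : ZMod n)
              = T ((m - 1 : ℕ) : ZMod n) * T ((j : ℕ) : ZMod n) := by
            apply hcomm
            · intro h
              apply hne.2
              rw [← hd, ← neg_eq_iff_eq_neg, neg_sub]
              exact h
            · rw [hd]; exact hne.1
          rw [mul_assoc, ← mul_assoc (T ((j : ℕ) : ZMod n)), hc,
            mul_assoc, IH (m - 1) (by omega) (by omega) j (by omega)]
        · -- j = m - 2 : braid
          have hj : j = m - 2 := by omega
          have hm2 : 2 ≤ m := by omega
          subst hj
          rw [CProd_cons n T (m - 1) e (by omega) (by omega) hen,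
            (by omega : m - 1 - 1 = m - 2)]
          set C := CProd n T (m - 2) e with hC
          set c0 := ((m - 2 : ℕ) : ZMod n) with hc0
          set c1 := ((m - 1 : ℕ) : ZMod n) with hc1
          have hsucc : c0 + 1 = c1 := by
            rw [hc0, hc1]
            push_cast [Nat.cast_sub (by omega : 1 ≤ m), Nat.cast_sub hm2]
            ring
          have hb := hbraid c0
          rw [hsucc] at hb
          have hcomm' : T c1 * C = C * T c1 := by
            rw [hC]
            exact prod_comm_of_comm T c1 _ (hcw m hm2 hmi)
          have hTx : T c1 * x = x := hx (m - 1) (by omega) (by omega)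
          have h3 : T c1 * (C * x) = C * x := by
            rw [← mul_assoc, hcomm', mul_assoc, hTx]
          simp only [mul_assoc]
          calc T c0 * (T c1 * (T c0 * (C * x)))
              = (T c0 * T c1 * T c0) * (C * x) := by simp only [mul_assoc]
            _ = (T c1 * T c0 * T c1) * (C * x) := by rw [hb]
            _ = T c1 * (T c0 * (T c1 * (C * x))) := by simp only [mul_assoc]
            _ = T c1 * (T c0 * (C * x)) := by rw [h3]
      · -- j = m - 1 : idempotent
        have : j = m - 1 := by omega
        subst this
        rw [← mul_assoc, ← mul_assoc, hidem]
  intro j hj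
  exact key i le_rfl j hj
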